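/- Soundness of the calculus DFD: every formula derivable in the proof system DFD is true at every state of every general relational model of DFD; likewise, every formula derivable in the restricted system DFD^{≠∅} is true at every state of every general relational model of DFD^{≠∅}. -/

import Mathlib

/-- Terms of DFD: `x ::= v | ○x`. -/
inductive Tm (V : Type) : Type where
  | base : V → Tm V
  | next : Tm V → Tm V
deriving DecidableEq

namespace Tm

variable {V : Type}

/-- The set of terms `○X := {○x : x ∈ X}`. -/
def nextSet [DecidableEq V] (X : Finset (Tm V)) : Finset (Tm V) := X.image Tm.next

/-- The number of `○`'s in a term. -/
def depth : Tm V → ℕ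
  | .base _ => 0
  | .next x => x.depth + 1

/-- The basic variable underlying a term. -/
def baseVar : Tm V → V
  | .base v => v
  | .next x => x.baseVar

/-- The term `○ⁿ x`. -/
def iter : ℕ → Tm V → Tm V
  | 0, x => x
  | n + 1, x => .next (iter n x)

/-- The set of terms `○ⁿ X`. -/
def iterSet [DecidableEq V] : ℕ → Finset (Tm V) → Finset (Tm V)
  | 0, X => X
  | n + 1, X => nextSet (iterSet n X)

end Tm

/-- Formulas of the language `L` of DFD, for the vocabulary `(V, Pred, ar)`. -/
inductive Fm (V Pred : Type) (ar : Pred → ℕ) : Type where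
  | atom : (P : Pred) → (Fin (ar P) → Tm V) → Fm V Pred ar
  | neg : Fm V Pred ar → Fm V Pred ar
  | and : Fm V Pred ar → Fm V Pred ar → Fm V Pred ar
  | next : Fm V Pred ar → Fm V Pred ar
  | dquant : Finset (Tm V) → Fm V Pred ar → Fm V Pred ar
  | datom : Finset (Tm V) → Tm V → Fm V Pred ar

namespace Fm

variable {V Pred : Type} {ar : Pred → ℕ}

/-- Material implication, defined from `¬` and `∧`. -/
def imp (φ ψ : Fm V Pred ar) : Fm V Pred ar := .neg (.and φ (.neg ψ))

/-- Material biconditional. -/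
def iff (φ ψ : Fm V Pred ar) : Fm V Pred ar := .and (φ.imp ψ) (ψ.imp φ)

/-- The formula `○ⁿ φ`. -/
def iterNext : ℕ → Fm V Pred ar → Fm V Pred ar
  | 0, φ => φ
  | n + 1, φ => .next (iterNext n φ)

/-- Boolean evaluation of a formula under a valuation of formulas; formulas that are not
negations or conjunctions are treated as propositional atoms. -/
def boolEval (v : Fm V Pred ar → Bool) : Fm V Pred ar → Bool
  | .neg φ => !(boolEval v φ)
  | .and φ ψ => boolEval v φ && boolEval v ψ
  | φ => v φ

/-- Classical propositional tautologies. -/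
def Taut (φ : Fm V Pred ar) : Prop := ∀ v, boolEval v φ = true

/-- A fixed trivially valid formula `D_{{v₀}} v₀`, used as the empty conjunction. -/
def vtop [Inhabited V] : Fm V Pred ar := .datom {Tm.base default} (Tm.base default)

/-- Conjunction of a list of formulas. -/
def bigAnd [Inhabited V] : List (Fm V Pred ar) → Fm V Pred ar
  | [] => vtop
  | φ :: l => l.foldl Fm.and φ

/-- The formula `D_X Y`: the conjunction of `D_X y` over `y ∈ Y`. -/
noncomputable def depF [Inhabited V] (X Y : Finset (Tm V)) : Fm V Pred ar :=
  bigAnd (Y.toList.map (Fm.datom X))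

/-- Membership in the fragment `L^{≠∅}`: every index set of a dependence quantifier or
dependence atom is non-empty. -/
def neIdx : Fm V Pred ar → Prop
  | .atom _ _ => True
  | .neg φ => φ.neIdx
  | .and φ ψ => φ.neIdx ∧ ψ.neIdx
  | .next φ => φ.neIdx
  | .dquant X φ => X.Nonempty ∧ φ.neIdx
  | .datom X _ => X.Nonempty

end Fm

/-- The set `V = {v₁, …, v_N}` of all basic variables, as a set of terms. -/
def fullV (V : Type) [Fintype V] [DecidableEq V] : Finset (Tm V) :=
  (Finset.univ : Finset V).image Tm.base
section Calculus

variable {V Pred : Type} [DecidableEq V] [Fintype V] [Inhabited V] {ar : Pred → ℕ}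

/-- The axioms of the Hilbert system DFD, apart from classical propositional tautologies and
the axiom `𝖣-○` (`𝖣_∅ φ → ○φ`). -/
inductive DFDAxiom : Fm V Pred ar → Prop where
  | oDist (φ ψ : Fm V Pred ar) :
      DFDAxiom ((Fm.next (φ.imp ψ)).imp ((Fm.next φ).imp (Fm.next ψ)))
  | funct (φ : Fm V Pred ar) :
      DFDAxiom ((Fm.next φ.neg).iff (Fm.next φ).neg)
  | dDist (X : Finset (Tm V)) (φ ψ : Fm V Pred ar) :
      DFDAxiom ((Fm.dquant X (φ.imp ψ)).imp ((Fm.dquant X φ).imp (Fm.dquant X ψ)))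
  | dIntro1 (P : Pred) (args : Fin (ar P) → Tm V) :
      DFDAxiom ((Fm.atom P args).imp (Fm.dquant (Finset.image args Finset.univ) (Fm.atom P args)))
  | dIntro2 (X : Finset (Tm V)) (y : Tm V) :
      DFDAxiom ((Fm.datom X y).imp (Fm.dquant X (Fm.datom X y)))
  | dT (X : Finset (Tm V)) (φ : Fm V Pred ar) :
      DFDAxiom ((Fm.dquant X φ).imp φ)
  | d4 (X : Finset (Tm V)) (φ : Fm V Pred ar) :
      DFDAxiom ((Fm.dquant X φ).imp (Fm.dquant X (Fm.dquant X φ)))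
  | d5 (X : Finset (Tm V)) (φ : Fm V Pred ar) :
      DFDAxiom ((Fm.dquant X φ).neg.imp (Fm.dquant X (Fm.dquant X φ).neg))
  | depRef (X : Finset (Tm V)) (x : Tm V) (h : x ∈ X) :
      DFDAxiom (Fm.datom X x)
  | depTrans (X Y Z : Finset (Tm V)) :
      DFDAxiom (((Fm.depF X Y).and (Fm.depF Y Z)).imp (Fm.depF X Z))
  | determinism (v : V) :
      DFDAxiom (Fm.datom (fullV V) (Tm.next (Tm.base v)))
  | transfer (X Y : Finset (Tm V)) (φ : Fm V Pred ar) :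
      DFDAxiom (((Fm.depF X Y).and (Fm.dquant Y φ)).imp (Fm.dquant X φ))
  | atomicRed (P : Pred) (args : Fin (ar P) → Tm V) :
      DFDAxiom ((Fm.next (Fm.atom P args)).iff (Fm.atom P fun i => Tm.next (args i)))
  | nextTime1 (X : Finset (Tm V)) (φ : Fm V Pred ar) :
      DFDAxiom ((Fm.next (Fm.dquant X φ)).imp (Fm.dquant (Tm.nextSet X) (Fm.next φ)))
  | nextTime2 (X : Finset (Tm V)) (y : Tm V) :
      DFDAxiom ((Fm.next (Fm.datom X y)).imp (Fm.datom (Tm.nextSet X) (Tm.next y)))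

/-- Derivability in the Hilbert system DFD. -/
inductive DFDDeriv : Fm V Pred ar → Prop where
  | ax {φ : Fm V Pred ar} : DFDAxiom φ → DFDDeriv φ
  | dO (φ : Fm V Pred ar) : DFDDeriv ((Fm.dquant ∅ φ).imp (Fm.next φ))
  | taut {φ : Fm V Pred ar} : Fm.Taut φ → DFDDeriv φ
  | mp {φ ψ : Fm V Pred ar} : DFDDeriv (φ.imp ψ) → DFDDeriv φ → DFDDeriv ψ
  | dNec (X : Finset (Tm V)) {φ : Fm V Pred ar} : DFDDeriv φ → DFDDeriv (Fm.dquant X φ)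

/-- Derivability in the restricted Hilbert system DFD^{≠∅}: the calculus is restricted to the
fragment `L^{≠∅}`, the axiom `𝖣-○` is dropped, and the rule of `○`-necessitation is added. -/
inductive DFDDerivNE : Fm V Pred ar → Prop where
  | ax {φ : Fm V Pred ar} : DFDAxiom φ → φ.neIdx → DFDDerivNE φ
  | taut {φ : Fm V Pred ar} : Fm.Taut φ → φ.neIdx → DFDDerivNE φ
  | mp {φ ψ : Fm V Pred ar} : DFDDerivNE (φ.imp ψ) → DFDDerivNE φ → DFDDerivNE ψ
  | dNec (X : Finset (Tm V)) {φ : Fm V Pred ar} :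
      X.Nonempty → DFDDerivNE φ → DFDDerivNE (Fm.dquant X φ)
  | oNec {φ : Fm V Pred ar} : DFDDerivNE φ → DFDDerivNE (Fm.next φ)

end Calculus
/-- The underlying frame of a general relational model: a set of worlds, a transition
function, a binary relation `=_X` for each finite set of terms `X`, and a valuation for
predicate atoms and dependence atoms. -/
structure GRKripke (V Pred : Type) (ar : Pred → ℕ) where
  W : Type
  nonempty : Nonempty W
  g : W → W
  eq : Finset (Tm V) → W → W → Prop
  valAtom : (P : Pred) → (Fin (ar P) → Tm V) → W → Prop
  valDep : Finset (Tm V) → Tm V → W → Prop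

variable {V Pred : Type} {ar : Pred → ℕ}

/-- Truth of a formula at a state of a general relational model. -/
def GRKripke.sat (M : GRKripke V Pred ar) : Fm V Pred ar → M.W → Prop
  | .atom P args, s => M.valAtom P args s
  | .neg φ, s => ¬ M.sat φ s
  | .and φ ψ, s => M.sat φ s ∧ M.sat ψ s
  | .next φ, s => M.sat φ (M.g s)
  | .dquant X φ, s => ∀ t, M.eq X s t → M.sat φ t
  | .datom X y, s => M.valDep X y s

/-- General relational models of the logic DFD (conditions C1–C8). -/
structure GRModel (V Pred : Type) [DecidableEq V] [Fintype V] (ar : Pred → ℕ)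
    extends GRKripke V Pred ar where
  C1 : ∀ s w, eq ∅ s w
  C2 : ∀ X : Finset (Tm V), Equivalence (eq X)
  C3ref : ∀ (X : Finset (Tm V)) (x : Tm V), x ∈ X → ∀ s, valDep X x s
  C3trans : ∀ (X Y Z : Finset (Tm V)) (s : W), (∀ y ∈ Y, valDep X y s) →
      (∀ z ∈ Z, valDep Y z s) → ∀ z ∈ Z, valDep X z s
  C3det : ∀ (x : Tm V) (s : W), valDep (fullV V) (Tm.next x) s
  C4 : ∀ (X Y : Finset (Tm V)) (s w : W), eq X s w → (∀ y ∈ Y, valDep X y s) →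
      (∀ y ∈ Y, valDep X y w) ∧ eq Y s w
  C5 : ∀ (P : Pred) (args : Fin (ar P) → Tm V) (X : Finset (Tm V)) (s w : W),
      eq X s w → (∀ i, args i ∈ X) → valAtom P args s → valAtom P args w
  C6 : ∀ (P : Pred) (args : Fin (ar P) → Tm V) (s : W),
      valAtom P (fun i => Tm.next (args i)) s ↔ valAtom P args (g s)
  C7 : ∀ (X : Finset (Tm V)) (s w : W), eq (Tm.nextSet X) s w → eq X (g s) (g w)
  C8 : ∀ (X Y : Finset (Tm V)) (s : W), (∀ y ∈ Y, valDep X y (g s)) →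
      ∀ y ∈ Tm.nextSet Y, valDep (Tm.nextSet X) y s

/-- General relational models of the logic DFD^{≠∅}: the relations `=_X` and conditions are
only required for non-empty `X`, and condition C1 is dropped. -/
structure GRModelNE (V Pred : Type) [DecidableEq V] [Fintype V] (ar : Pred → ℕ)
    extends GRKripke V Pred ar where
  C2 : ∀ X : Finset (Tm V), X.Nonempty → Equivalence (eq X)
  C3ref : ∀ (X : Finset (Tm V)) (x : Tm V), x ∈ X → ∀ s, valDep X x s
  C3trans : ∀ (X Y Z : Finset (Tm V)) (s : W), X.Nonempty → Y.Nonempty →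
      (∀ y ∈ Y, valDep X y s) → (∀ z ∈ Z, valDep Y z s) → ∀ z ∈ Z, valDep X z s
  C3det : ∀ (x : Tm V) (s : W), valDep (fullV V) (Tm.next x) s
  C4 : ∀ (X Y : Finset (Tm V)) (s w : W), X.Nonempty → Y.Nonempty →
      eq X s w → (∀ y ∈ Y, valDep X y s) → (∀ y ∈ Y, valDep X y w) ∧ eq Y s w
  C5 : ∀ (P : Pred) (args : Fin (ar P) → Tm V) (X : Finset (Tm V)) (s w : W), X.Nonempty →
      eq X s w → (∀ i, args i ∈ X) → valAtom P args s → valAtom P args w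
  C6 : ∀ (P : Pred) (args : Fin (ar P) → Tm V) (s : W),
      valAtom P (fun i => Tm.next (args i)) s ↔ valAtom P args (g s)
  C7 : ∀ (X : Finset (Tm V)) (s w : W), X.Nonempty →
      eq (Tm.nextSet X) s w → eq X (g s) (g w)
  C8 : ∀ (X Y : Finset (Tm V)) (s : W), X.Nonempty → (∀ y ∈ Y, valDep X y (g s)) →
      ∀ y ∈ Tm.nextSet Y, valDep (Tm.nextSet X) y s
attribute [local instance] Classical.propDecidable

section Aux

variable {V Pred : Type} {ar : Pred → ℕ}

lemma sat_imp (M : GRKripke V Pred ar) (φ ψ : Fm V Pred ar) (s : M.W) :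
    M.sat (φ.imp ψ) s ↔ (M.sat φ s → M.sat ψ s) := by
  simp only [Fm.imp, GRKripke.sat]; tauto

lemma sat_iff (M : GRKripke V Pred ar) (φ ψ : Fm V Pred ar) (s : M.W) :
    M.sat (φ.iff ψ) s ↔ (M.sat φ s ↔ M.sat ψ s) := by
  have h0 : M.sat (φ.iff ψ) s ↔ (M.sat (φ.imp ψ) s ∧ M.sat (ψ.imp φ) s) := Iff.rfl
  rw [h0, sat_imp, sat_imp]
  tauto

lemma boolEval_sat (M : GRKripke V Pred ar) (s : M.W) (φ : Fm V Pred ar) :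
    Fm.boolEval (fun χ => decide (M.sat χ s)) φ = decide (M.sat φ s) := by
  induction φ with
  | neg φ ih => rw [Bool.eq_iff_iff]; simp only [decide_eq_true_eq]; simp [Fm.boolEval, GRKripke.sat, ih]
  | and φ ψ ih1 ih2 => rw [Bool.eq_iff_iff]; simp only [decide_eq_true_eq]; simp [Fm.boolEval, GRKripke.sat, ih1, ih2]
  | atom P args => rfl
  | next φ _ => rfl
  | dquant X φ _ => rfl
  | datom X y => rfl

lemma sat_taut (M : GRKripke V Pred ar) (s : M.W) {φ : Fm V Pred ar} (h : Fm.Taut φ) :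
    M.sat φ s := by
  have := h (fun χ => decide (M.sat χ s))
  rw [boolEval_sat] at this
  exact of_decide_eq_true this

lemma sat_foldl_and (M : GRKripke V Pred ar) (s : M.W) (l : List (Fm V Pred ar))
    (φ : Fm V Pred ar) :
    M.sat (l.foldl Fm.and φ) s ↔ M.sat φ s ∧ ∀ ψ ∈ l, M.sat ψ s := by
  induction l generalizing φ with
  | nil => simp
  | cons a l ih =>
    simp only [List.foldl_cons, ih, GRKripke.sat, List.mem_cons]
    constructor
    · rintro ⟨⟨h1, h2⟩, h3⟩
      exact ⟨h1, fun ψ hψ => by rcases hψ with rfl | hψ; exacts [h2, h3 ψ hψ]⟩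
    · rintro ⟨h1, h2⟩
      exact ⟨⟨h1, h2 a (Or.inl rfl)⟩, fun ψ hψ => h2 ψ (Or.inr hψ)⟩

variable [DecidableEq V] [Fintype V] [Inhabited V]

lemma sat_depF (M : GRKripke V Pred ar)
    (hv : ∀ s, M.valDep {Tm.base default} (Tm.base default) s) (X Y : Finset (Tm V))
    (s : M.W) :
    M.sat (Fm.depF X Y : Fm V Pred ar) s ↔ ∀ y ∈ Y, M.valDep X y s := by
  unfold Fm.depF Fm.bigAnd
  cases h : (Y.toList.map (Fm.datom X (ar := ar))) with
  | nil =>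
    have : Y = ∅ := by
      rcases List.map_eq_nil_iff.mp h with h'
      exact Finset.toList_eq_nil.mp h'
    subst this
    simp [GRKripke.sat, Fm.vtop, hv s]
  | cons a l =>
    rw [sat_foldl_and]
    constructor
    · rintro ⟨h1, h2⟩ y hy
      have : Fm.datom X y ∈ a :: l := by
        rw [← h]; exact List.mem_map_of_mem (Finset.mem_toList.mpr hy)
      rcases List.mem_cons.mp this with h' | h'
      · show M.sat (Fm.datom X y) s; rw [h']; exact h1
      · exact h2 _ h'
    · intro hall
      have key : ∀ ψ ∈ a :: l, M.sat ψ s := by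
        intro ψ hψ
        rw [← h] at hψ
        rcases List.mem_map.mp hψ with ⟨y, hy, rfl⟩
        exact hall y (Finset.mem_toList.mp hy)
      exact ⟨key a List.mem_cons_self, fun ψ hψ => key ψ (List.mem_cons_of_mem _ hψ)⟩

lemma neIdx_foldl {l : List (Fm V Pred ar)} {φ : Fm V Pred ar}
    (h : (l.foldl Fm.and φ).neIdx) : φ.neIdx := by
  induction l generalizing φ with
  | nil => exact h
  | cons a l ih =>
    simp only [List.foldl_cons] at h
    exact (ih h).1

lemma neIdx_depF {X Y : Finset (Tm V)} (h : (Fm.depF X Y : Fm V Pred ar).neIdx)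
    (hY : Y.Nonempty) : X.Nonempty := by
  unfold Fm.depF Fm.bigAnd at h
  cases hl : (Y.toList.map (Fm.datom X (ar := ar))) with
  | nil =>
    exfalso
    have := Finset.toList_eq_nil.mp (List.map_eq_nil_iff.mp hl)
    simp [this] at hY
  | cons a l =>
    rw [hl] at h
    have ha := neIdx_foldl h
    have : a ∈ Y.toList.map (Fm.datom X (ar := ar)) := by rw [hl]; exact List.mem_cons_self
    rcases List.mem_map.mp this with ⟨y, _, rfl⟩
    exact ha

end Aux

section Sound

attribute [local instance] Classical.propDecidable

variable {V Pred : Type} [DecidableEq V] [Fintype V] [Inhabited V] {ar : Pred → ℕ}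

lemma ax_sound (M : GRModel V Pred ar) {φ : Fm V Pred ar} (h : DFDAxiom φ) (s : M.W) :
    M.toGRKripke.sat φ s := by
  have hv : ∀ s, M.valDep {Tm.base default} (Tm.base default) s :=
    fun s => M.C3ref _ _ (Finset.mem_singleton_self _) s
  cases h with
  | oDist φ ψ =>
    simp only [Fm.imp, GRKripke.sat]; tauto
  | funct φ =>
    simp only [Fm.iff, Fm.imp, GRKripke.sat]; tauto
  | dDist X φ ψ =>
    rw [sat_imp, sat_imp]
    intro h1 h2 t ht
    exact (sat_imp _ _ _ _).mp (h1 t ht) (h2 t ht)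
  | dIntro1 P args =>
    rw [sat_imp]
    intro h t ht
    exact M.C5 P args _ s t ht
      (fun i => Finset.mem_image_of_mem args (Finset.mem_univ i)) h
  | dIntro2 X y =>
    rw [sat_imp]
    intro h t ht
    exact (M.C4 X {y} s t ht
      (fun y' hy' => by rw [Finset.mem_singleton] at hy'; subst hy'; exact h)).1
      y (Finset.mem_singleton_self _)
  | dT X φ =>
    rw [sat_imp]; intro h; exact h s ((M.C2 X).refl s)
  | d4 X φ =>
    rw [sat_imp]
    intro h t ht u htu
    exact h u ((M.C2 X).trans ht htu)
  | d5 X φ =>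
    rw [sat_imp]
    intro h t ht h2
    exact h (fun u hsu => h2 u ((M.C2 X).trans ((M.C2 X).symm ht) hsu))
  | depRef X x hx =>
    exact M.C3ref X x hx s
  | depTrans X Y Z =>
    rw [sat_imp]
    rintro ⟨h1, h2⟩
    rw [sat_depF _ hv] at h1 h2
    rw [sat_depF _ hv]
    exact M.C3trans X Y Z s h1 h2
  | determinism v =>
    exact M.C3det (Tm.base v) s
  | transfer X Y φ =>
    rw [sat_imp]
    rintro ⟨h1, h2⟩ t ht
    rw [sat_depF _ hv] at h1
    exact h2 t (M.C4 X Y s t ht h1).2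
  | atomicRed P args =>
    rw [sat_iff]
    exact (M.C6 P args s).symm
  | nextTime1 X φ =>
    rw [sat_imp]
    intro h t ht
    exact h (M.g t) (M.C7 X s t ht)
  | nextTime2 X y =>
    rw [sat_imp]
    intro h
    exact M.C8 X {y} s
      (by intro y' hy'; rw [Finset.mem_singleton] at hy'; subst hy'; exact h)
      (Tm.next y)
      (by simp [Tm.nextSet])

lemma ax_soundNE (M : GRModelNE V Pred ar) {φ : Fm V Pred ar} (h : DFDAxiom φ)
    (hne : φ.neIdx) (s : M.W) : M.toGRKripke.sat φ s := by
  have hv : ∀ s, M.valDep {Tm.base default} (Tm.base default) s :=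
    fun s => M.C3ref _ _ (Finset.mem_singleton_self _) s
  cases h with
  | oDist φ ψ =>
    simp only [Fm.imp, GRKripke.sat]; tauto
  | funct φ =>
    simp only [Fm.iff, Fm.imp, GRKripke.sat]; tauto
  | dDist X φ ψ =>
    rw [sat_imp, sat_imp]
    intro h1 h2 t ht
    exact (sat_imp _ _ _ _).mp (h1 t ht) (h2 t ht)
  | dIntro1 P args =>
    simp only [Fm.imp, Fm.neIdx] at hne
    rw [sat_imp]
    intro h t ht
    exact M.C5 P args _ s t hne.2.1 ht
      (fun i => Finset.mem_image_of_mem args (Finset.mem_univ i)) h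
  | dIntro2 X y =>
    simp only [Fm.imp, Fm.neIdx] at hne
    rw [sat_imp]
    intro h t ht
    exact (M.C4 X {y} s t hne.1 (Finset.singleton_nonempty y) ht
      (by intro y' hy'; rw [Finset.mem_singleton] at hy'; subst hy'; exact h)).1
      y (Finset.mem_singleton_self _)
  | dT X φ =>
    simp only [Fm.imp, Fm.neIdx] at hne
    rw [sat_imp]; intro h; exact h s ((M.C2 X hne.1.1).refl s)
  | d4 X φ =>
    simp only [Fm.imp, Fm.neIdx] at hne
    rw [sat_imp]
    intro h t ht u htu
    exact h u ((M.C2 X hne.1.1).trans ht htu)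
  | d5 X φ =>
    simp only [Fm.imp, Fm.neIdx] at hne
    rw [sat_imp]
    intro h t ht h2
    exact h (fun u hsu => h2 u ((M.C2 X hne.1.1).trans ((M.C2 X hne.1.1).symm ht) hsu))
  | depRef X x hx =>
    exact M.C3ref X x hx s
  | depTrans X Y Z =>
    simp only [Fm.imp, Fm.neIdx] at hne
    rw [sat_imp]
    rintro ⟨h1, h2⟩
    rw [sat_depF _ hv] at h1 h2
    rw [sat_depF _ hv]
    rcases Finset.eq_empty_or_nonempty Z with rfl | hZ
    · intro z hz; exact absurd hz (Finset.notMem_empty z)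
    · have hY : Y.Nonempty := neIdx_depF hne.1.2 hZ
      have hX : X.Nonempty := neIdx_depF hne.1.1 hY
      exact M.C3trans X Y Z s hX hY h1 h2
  | determinism v =>
    exact M.C3det (Tm.base v) s
  | transfer X Y φ =>
    simp only [Fm.imp, Fm.neIdx] at hne
    rw [sat_imp]
    rintro ⟨h1, h2⟩ t ht
    rw [sat_depF _ hv] at h1
    exact h2 t (M.C4 X Y s t hne.2.1 hne.1.2.1 ht h1).2
  | atomicRed P args =>
    rw [sat_iff]
    exact (M.C6 P args s).symm
  | nextTime1 X φ =>
    simp only [Fm.imp, Fm.neIdx] at hne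
    rw [sat_imp]
    intro h t ht
    exact h (M.g t) (M.C7 X s t hne.1.1 ht)
  | nextTime2 X y =>
    simp only [Fm.imp, Fm.neIdx] at hne
    rw [sat_imp]
    intro h
    exact M.C8 X {y} s hne.1
      (by intro y' hy'; rw [Finset.mem_singleton] at hy'; subst hy'; exact h)
      (Tm.next y)
      (by simp [Tm.nextSet])

end Sound

/-- **Soundness of the calculus DFD** (and of DFD^{≠∅}): every formula derivable in the proof
system DFD is true at every state of every general relational model of DFD; likewise, every
formula derivable in the restricted system DFD^{≠∅} is true at every state of every general
relational model of DFD^{≠∅}. -/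
theorem DFD_soundness_general {V Pred : Type} [DecidableEq V] [Fintype V] [Inhabited V]
    {ar : Pred → ℕ} :
    (∀ φ : Fm V Pred ar, DFDDeriv φ →
      ∀ (M : GRModel V Pred ar) (s : M.W), M.toGRKripke.sat φ s) ∧
    (∀ φ : Fm V Pred ar, DFDDerivNE φ →
      ∀ (M : GRModelNE V Pred ar) (s : M.W), M.toGRKripke.sat φ s) := by
  constructor
  · intro φ h
    induction h with
    | ax hA => intro M s; exact ax_sound M hA s
    | dO φ =>
      intro M s
      rw [sat_imp]
      intro h
      exact h (M.g s) (M.C1 s (M.g s))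
    | taut ht => intro M s; exact sat_taut _ s ht
    | mp h1 h2 ih1 ih2 =>
      intro M s
      exact (sat_imp _ _ _ _).mp (ih1 M s) (ih2 M s)
    | dNec X h ih => intro M s t ht; exact ih M t
  · intro φ h
    induction h with
    | ax hA hne => intro M s; exact ax_soundNE M hA hne s
    | taut ht _ => intro M s; exact sat_taut _ s ht
    | mp h1 h2 ih1 ih2 =>
      intro M s
      exact (sat_imp _ _ _ _).mp (ih1 M s) (ih2 M s)
    | dNec X hX h ih => intro M s t ht; exact ih M t
    | oNec h ih => intro M s; exact ih M (M.g s)
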